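/- Let 0 < ε < 1 be a real number and let n, t be positive integers with t < (1+ε)^n. If A = {a_1, a_2, …, a_n} is an n-element set of positive integers that is sumset-distinct modulo N = 2^n + t, then max A ≥ (1-ε)·N/3. -/

import Mathlib

/-- An `n`-element set `A` of positive integers is *sumset-distinct modulo `N`*
if all subset sums (including the empty sum 0) are pairwise distinct modulo `N`. -/
def SumsetDistinctMod (N : ℕ) (A : Finset ℕ) : Prop :=
  ∀ B ⊆ A, ∀ C ⊆ A, (∑ x ∈ B, x) % N = (∑ x ∈ C, x) % N → B = C

set_option maxHeartbeats 1000000 in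
open Real Finset in
theorem stmt0 (ε : ℝ) (hε0 : 0 < ε) (hε1 : ε < 1) (n t : ℕ) (hn : 0 < n) (ht : 0 < t)
    (htlt : (t : ℝ) < (1 + ε) ^ n) (N : ℕ) (hN : N = 2 ^ n + t)
    (A : Finset ℕ) (hApos : ∀ a ∈ A, 0 < a) (hAcard : A.card = n)
    (hA : SumsetDistinctMod N A) (hAne : A.Nonempty) :
    (1 - ε) * N / 3 ≤ (A.max' hAne : ℝ) := by
  by_contra hcon
  push_neg at hcon
  -- basic facts about N
  have h2n : 2 ≤ 2 ^ n := by
    calc (2:ℕ) = 2 ^ 1 := (pow_one 2).symm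
    _ ≤ 2 ^ n := Nat.pow_le_pow_right (by norm_num) hn
  have hNge : 3 ≤ N := by omega
  have hN0 : (0:ℝ) < (N:ℝ) := by positivity
  have hN3' : (3:ℝ) ≤ (N:ℝ) := by exact_mod_cast hNge
  have hπ : (0:ℝ) < π := Real.pi_pos
  -- the root of unity
  set ω : ℂ := Complex.exp ((((2 * π / N : ℝ)) : ℂ) * Complex.I) with hω
  have hωN : ω ^ N = 1 := by
    rw [hω, ← Complex.exp_nat_mul]
    have h1 : (N:ℂ) * ((((2 * π / N : ℝ)) : ℂ) * Complex.I) = 2 * (π:ℂ) * Complex.I := by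
      have hNC : (N:ℂ) ≠ 0 := Nat.cast_ne_zero.mpr (by omega)
      push_cast
      field_simp
    rw [h1, Complex.exp_two_pi_mul_I]
  have hω1 : ω ≠ 1 := by
    intro h
    have hre : (Complex.exp ((((2 * π / N : ℝ)) : ℂ) * Complex.I)).re = Real.cos (2 * π / N) :=
      Complex.exp_ofReal_mul_I_re _
    have h1 : Real.cos (2 * π / N) = 1 := by
      rw [← hre, ← hω, h]; simp
    have h2 : Real.cos (2 * π / N) < Real.cos 0 := by
      apply Real.cos_lt_cos_of_nonneg_of_le_pi le_rfl
      · -- 2π/N ≤ π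
        rw [div_le_iff₀ hN0]
        nlinarith
      · positivity
    rw [Real.cos_zero] at h2
    linarith
  -- |ω^r| = 1
  have habsω : ∀ r : ℕ, ‖ω ^ r‖ = 1 := by
    intro r
    rw [norm_pow, hω, Complex.norm_exp_ofReal_mul_I, one_pow]
  -- product over A equals sum over powerset
  have hprod : ∏ a ∈ A, (1 + ω ^ a) = ∑ B ∈ A.powerset, ω ^ (∑ x ∈ B, x) := by
    have h1 : ∏ a ∈ A, ((fun a => ω ^ a) a + (fun _ => (1:ℂ)) a)
        = ∑ B ∈ A.powerset, (∏ a ∈ B, ω ^ a) * ∏ a ∈ A \ B, (1:ℂ) :=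
      Finset.prod_add _ _ _
    simp only [Finset.prod_const_one, mul_one] at h1
    calc ∏ a ∈ A, (1 + ω ^ a) = ∏ a ∈ A, (ω ^ a + 1) := by
          exact Finset.prod_congr rfl fun a _ => add_comm _ _
    _ = ∑ B ∈ A.powerset, ∏ a ∈ B, ω ^ a := h1
    _ = ∑ B ∈ A.powerset, ω ^ (∑ x ∈ B, x) := by
          exact Finset.sum_congr rfl fun B _ => Finset.prod_pow_eq_pow_sum B _ ω
  -- reduce exponents mod N
  have hmod : ∀ m : ℕ, ω ^ m = ω ^ (m % N) := by
    intro m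
    conv_lhs => rw [← Nat.div_add_mod m N]
    rw [pow_add, pow_mul, hωN, one_pow, one_mul]
  -- the residue image
  set g : Finset ℕ → ℕ := fun B => (∑ x ∈ B, x) % N with hg
  set R : Finset ℕ := A.powerset.image g with hR
  have hginj : ∀ B ∈ A.powerset, ∀ C ∈ A.powerset, g B = g C → B = C := by
    intro B hB C hC h
    exact hA B (Finset.mem_powerset.mp hB) C (Finset.mem_powerset.mp hC) h
  have hsum2 : ∑ B ∈ A.powerset, ω ^ (∑ x ∈ B, x) = ∑ r ∈ R, ω ^ r := by
    rw [hR, Finset.sum_image hginj]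
    exact Finset.sum_congr rfl fun B _ => hmod _
  have hRsub : R ⊆ Finset.range N := by
    intro r hr
    rw [hR] at hr
    obtain ⟨B, _, rfl⟩ := Finset.mem_image.mp hr
    exact Finset.mem_range.mpr (Nat.mod_lt _ (by omega))
  have hRcard : R.card = 2 ^ n := by
    rw [hR, Finset.card_image_of_injOn fun B hB C hC h => hginj B hB C hC h,
      Finset.card_powerset, hAcard]
  have hgeom : ∑ r ∈ Finset.range N, ω ^ r = 0 := by
    rw [geom_sum_eq hω1, hωN, sub_self, zero_div]
  have hsplit : ∑ r ∈ R, ω ^ r = - ∑ r ∈ Finset.range N \ R, ω ^ r := by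
    have h := Finset.sum_sdiff (f := fun r => ω ^ r) hRsub
    rw [hgeom] at h
    linear_combination h
  have hTcard : (Finset.range N \ R).card = t := by
    rw [Finset.card_sdiff_of_subset hRsub, Finset.card_range, hRcard]; omega
  -- upper bound on the absolute value of the product
  have habs_le : ‖∏ a ∈ A, (1 + ω ^ a)‖ ≤ (t : ℝ) := by
    rw [hprod, hsum2, hsplit, norm_neg]
    calc ‖∑ r ∈ Finset.range N \ R, ω ^ r‖
        ≤ ∑ r ∈ Finset.range N \ R, ‖ω ^ r‖ := norm_sum_le _ _
    _ = ∑ r ∈ Finset.range N \ R, (1:ℝ) := Finset.sum_congr rfl fun r _ => habsω r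
    _ = (t : ℝ) := by rw [Finset.sum_const, hTcard]; simp
  -- per-element lower bound
  have hkey : ∀ a ∈ A, 1 + ε ≤ ‖1 + ω ^ a‖ := by
    intro a ha
    have ha0 : 0 < a := hApos a ha
    have ha0' : (0:ℝ) < (a:ℝ) := by exact_mod_cast ha0
    have haM : (a:ℝ) < (1 - ε) * N / 3 := by
      have h1 : (a:ℝ) ≤ (A.max' hAne : ℝ) := by
        exact_mod_cast Nat.cast_le.mpr (A.le_max' a ha)
      linarith
    set x : ℝ := π * a / N with hx
    have hxpos : 0 < x := by rw [hx]; positivity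
    have hxlt : x < π * (1 - ε) / 3 := by
      rw [hx, div_lt_div_iff₀ hN0 (by norm_num : (0:ℝ) < 3)]
      nlinarith
    have hx2 : x < π / 2 := by
      have : π * (1 - ε) / 3 < π / 2 := by nlinarith
      linarith
    -- ω^a = exp((2x) * I)
    have hωa : ω ^ a = Complex.exp (((2 * x : ℝ) : ℂ) * Complex.I) := by
      rw [hω, ← Complex.exp_nat_mul]
      congr 1
      have hNC : (N:ℂ) ≠ 0 := Nat.cast_ne_zero.mpr (by omega)
      rw [hx]
      push_cast
      field_simp
    -- 1 + exp(2x I) = exp(x I) * (2 cos x)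
    have hid : (1 : ℂ) + ω ^ a
        = Complex.exp (((x : ℝ) : ℂ) * Complex.I) * ((2 * Real.cos x : ℝ) : ℂ) := by
      rw [hωa, Complex.exp_mul_I, Complex.exp_mul_I]
      have h2x : ((2 * x : ℝ) : ℂ) = 2 * ((x:ℝ):ℂ) := by push_cast; ring
      rw [h2x, Complex.cos_two_mul, Complex.sin_two_mul]
      have hcos : ((Real.cos x : ℝ) : ℂ) = Complex.cos ((x:ℝ):ℂ) := Complex.ofReal_cos x
      rw [Complex.ofReal_mul, hcos]
      push_cast
      ring
    have hcosx : (0:ℝ) ≤ Real.cos x :=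
      Real.cos_nonneg_of_mem_Icc ⟨by linarith, le_of_lt hx2⟩
    have habs1 : ‖1 + ω ^ a‖ = 2 * Real.cos x := by
      rw [hid, norm_mul, Complex.norm_exp_ofReal_mul_I, one_mul, Complex.norm_real, Real.norm_eq_abs,
        abs_of_nonneg (by linarith)]
    -- chord bound: cos(π(1-ε)/3) ≥ (1+ε)/2
    have hchord : (1 + ε) / 2 ≤ Real.cos (π * (1 - ε) / 3) := by
      have hmem1 : π / 2 ∈ Set.Icc (0:ℝ) π := ⟨by positivity, by linarith⟩
      have hmem2 : π / 6 ∈ Set.Icc (0:ℝ) π := ⟨by positivity, by linarith⟩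
      have h2 := strictConcaveOn_sin_Icc.concaveOn.2 hmem1 hmem2
        (le_of_lt hε0) (by linarith : (0:ℝ) ≤ 1 - ε) (by ring)
      rw [smul_eq_mul, smul_eq_mul, smul_eq_mul, smul_eq_mul, Real.sin_pi_div_two,
        Real.sin_pi_div_six] at h2
      have h3 : ε * (π / 2) + (1 - ε) * (π / 6) = π / 2 - π * (1 - ε) / 3 := by ring
      rw [h3, Real.sin_pi_div_two_sub] at h2
      linarith
    have hmono : Real.cos (π * (1 - ε) / 3) ≤ Real.cos x := by
      apply Real.cos_le_cos_of_nonneg_of_le_pi (le_of_lt hxpos) _ (le_of_lt hxlt)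
      nlinarith
    rw [habs1]
    linarith
  -- lower bound on the product
  have hprodge : (1 + ε) ^ n ≤ ‖∏ a ∈ A, (1 + ω ^ a)‖ := by
    rw [norm_prod]
    calc (1 + ε) ^ n = ∏ _a ∈ A, (1 + ε) := by rw [Finset.prod_const, hAcard]
    _ ≤ ∏ a ∈ A, ‖1 + ω ^ a‖ :=
        Finset.prod_le_prod (fun a _ => by linarith) hkey
  linarith
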